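/- Proposition: The color-blind control is not ideal. Specifically, there exists a game (X, λ_w, p, G, v_q, v_u, ω) and a color-blind-controlled equilibrium (c̄*, d*) of that game that is not a non-discriminatory equilibrium, so property (2) of an ideal control fails for the color-blind control. -/

import Mathlib

/-!
Formalization of the Coate–Loury statistical discrimination model with
machine-learning (contractible) beliefs, following Zhu,
"The Impact of Equal Opportunity on Statistical Discrimination".
-/

open scoped BigOperators
open MeasureTheory

noncomputable section

attribute [local instance] Classical.propDecidable

/-- Group identities `I = {w, b}`. -/
inductive GrpI
  | w
  | b
deriving DecidableEq

instance instFintypeGrpI : Fintype GrpI :=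
  ⟨{GrpI.w, GrpI.b}, fun x => by cases x <;> simp⟩

/-- Classes `Y = {q, u}` (qualified / unqualified). -/
inductive Cls
  | q
  | u
deriving DecidableEq

instance instFintypeCls : Fintype Cls :=
  ⟨{Cls.q, Cls.u}, fun x => by cases x <;> simp⟩

/-- A game `(X, λ_w, p, G, v_q, v_u, ω)` of the Coate–Loury model.  The set of
other features is the finite product `X = X_1 × ⋯ × X_N`, encoded as the pi type
`(j : Fin N) → Xs j`.  The statistical model (Assumption 1) is encoded through a
nonempty subset `Ysub ⊆ {1, …, N}` together with the factorization
`p(x | i, y) = pY(x_𝒴 | y) · pC(x_{-𝒴} | i, x_𝒴)`.  The cost distribution is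
given by an everywhere positive density `g` with `∫ g = 1` and `∫ |c| g(c) dc < ∞`. -/
structure Game (N : ℕ) (Xs : Fin N → Type) [∀ j, Fintype (Xs j)]
    [∀ j, Nonempty (Xs j)] where
  lamw : ℝ
  lamw_pos : 0 < lamw
  lamw_lt_one : lamw < 1
  Ysub : Finset (Fin N)
  Ysub_nonempty : Ysub.Nonempty
  pY : ((j : Ysub) → Xs j.1) → Cls → ℝ
  pC : GrpI → ((j : Fin N) → Xs j) → ℝ
  pY_pos : ∀ xY y, 0 < pY xY y
  pC_pos : ∀ i x, 0 < pC i x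
  pY_sum : ∀ y, ∑ xY, pY xY y = 1
  pC_sum : ∀ (i : GrpI) (xY : (j : Ysub) → Xs j.1),
    ∑ x ∈ Finset.univ.filter
        (fun x : (j : Fin N) → Xs j => (fun j : Ysub => x j.1) = xY),
      pC i x = 1
  g : ℝ → ℝ
  g_pos : ∀ c, 0 < g c
  g_int : Integrable g
  g_norm : (∫ c, g c) = 1
  g_abs_int : Integrable fun c => |c| * g c
  vq : ℝ
  vu : ℝ
  om : ℝ
  vq_pos : 0 < vq
  vu_pos : 0 < vu
  om_pos : 0 < om

section Policies

variable {N : ℕ} {Xs : Fin N → Type}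

/-- A decision policy `d : I × X → [0,1]`. -/
def IsPolicy (d : GrpI → ((j : Fin N) → Xs j) → ℝ) : Prop :=
  ∀ i x, d i x ∈ Set.Icc (0 : ℝ) 1

/-- A decision policy when data is color-blind, `d_cb : X → [0,1]`. -/
def IsCbPolicy (dcb : ((j : Fin N) → Xs j) → ℝ) : Prop :=
  ∀ x, dcb x ∈ Set.Icc (0 : ℝ) 1

/-- `S ⊆ {1, …, N}` has the dependence property for the belief `f`:
`f` depends on `(i, x)` only up to `(i, x_S)`. -/
def DepProp {I : Type} (f : I → ((j : Fin N) → Xs j) → ℝ)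
    (S : Finset (Fin N)) : Prop :=
  ∀ (i : I) (x x' : (j : Fin N) → Xs j), (∀ j ∈ S, x j = x' j) → f i x = f i x'

/-- The minimal subset `Ŷ(f)` with the dependence property. -/
def minDep {I : Type} (f : I → ((j : Fin N) → Xs j) → ℝ) : Finset (Fin N) :=
  Finset.univ.filter fun j => ∀ S : Finset (Fin N), DepProp f S → j ∈ S

variable [∀ j, Fintype (Xs j)]

/-- Full-support probability distributions on `I × X` (the set `Δ°(I × X)`). -/
def FullSupp (μ : GrpI → ((j : Fin N) → Xs j) → ℝ) : Prop :=
  (∀ i x, 0 < μ i x) ∧ ∑ i, ∑ x, μ i x = 1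

/-- Beliefs valued in `(0, 1)`. -/
def OpenBelief (f : GrpI → ((j : Fin N) → Xs j) → ℝ) : Prop :=
  ∀ i x, f i x ∈ Set.Ioo (0 : ℝ) 1

/-- Acceptance rate of group `i`. -/
def AR (i : GrpI) (d μ : GrpI → ((j : Fin N) → Xs j) → ℝ) : ℝ :=
  (∑ x, d i x * μ i x) / ∑ x, μ i x

/-- True positive rate of group `i`. -/
def TP (i : GrpI) (d μ f : GrpI → ((j : Fin N) → Xs j) → ℝ) : ℝ :=
  (∑ x, d i x * μ i x * f i x) / ∑ x, μ i x * f i x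

/-- The equal opportunity control `k(X, μ, f)`. -/
def EOset (μ f : GrpI → ((j : Fin N) → Xs j) → ℝ) :
    Set (GrpI → ((j : Fin N) → Xs j) → ℝ) :=
  {d | IsPolicy d ∧ TP GrpI.w d μ f = TP GrpI.b d μ f}

/-- The color-blind control: all color-blind decision policies. -/
def CBset : Set (GrpI → ((j : Fin N) → Xs j) → ℝ) :=
  {d | IsPolicy d ∧ ∀ x, d GrpI.w x = d GrpI.b x}

/-- The no proxies control: policies depending on `(i,x)` only through `x_{Ŷ(f)}`. -/
def NoProxies (_μ f : GrpI → ((j : Fin N) → Xs j) → ℝ) :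
    Set (GrpI → ((j : Fin N) → Xs j) → ℝ) :=
  {d | IsPolicy d ∧
    ∀ i i' x x', (∀ j ∈ minDep f, x j = x' j) → d i x = d i' x'}

/-- `ℓ²` distance between decision policies. -/
def polDist (d d' : GrpI → ((j : Fin N) → Xs j) → ℝ) : ℝ :=
  Real.sqrt (∑ i, ∑ x, (d i x - d' i x) ^ 2)

/-- `ℓ²` distance between pairs `(μ, f)`. -/
def pairDist (μ f μ' f' : GrpI → ((j : Fin N) → Xs j) → ℝ) : ℝ :=
  Real.sqrt ((∑ i, ∑ x, (μ i x - μ' i x) ^ 2) + ∑ i, ∑ x, (f i x - f' i x) ^ 2)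

/-- `ℓ²` distance between strategy profiles `(c̄, d)`. -/
def profDist (c : GrpI → ℝ) (d : GrpI → ((j : Fin N) → Xs j) → ℝ)
    (c' : GrpI → ℝ) (d' : GrpI → ((j : Fin N) → Xs j) → ℝ) : ℝ :=
  Real.sqrt ((∑ i, (c i - c' i) ^ 2) + ∑ i, ∑ x, (d i x - d' i x) ^ 2)

end Policies

/-- Upper hemicontinuity of a correspondence on a set. -/
def UpperHemicontinuousOn' {α β : Type*} [TopologicalSpace α] [TopologicalSpace β]
    (F : α → Set β) (S : Set α) : Prop :=
  ∀ a ∈ S, ∀ V : Set β, IsOpen V → F a ⊆ V → ∀ᶠ a' in nhdsWithin a S, F a' ⊆ V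

/-- Lower hemicontinuity of a correspondence on a set. -/
def LowerHemicontinuousOn' {α β : Type*} [TopologicalSpace α] [TopologicalSpace β]
    (F : α → Set β) (S : Set α) : Prop :=
  ∀ a ∈ S, ∀ V : Set β, IsOpen V → (F a ∩ V).Nonempty →
    ∀ᶠ a' in nhdsWithin a S, (F a' ∩ V).Nonempty

namespace Game

variable {N : ℕ} {Xs : Fin N → Type} [∀ j, Fintype (Xs j)] [∀ j, Nonempty (Xs j)]
variable (Γ : Game N Xs)

/-- Projection `x ↦ x_𝒴`. -/
def proj (x : (j : Fin N) → Xs j) : (j : Γ.Ysub) → Xs j.1 := fun j => x j.1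

/-- `p(x | i, y) = p(x_𝒴 | y) · p(x_{-𝒴} | i, x_𝒴)`. -/
def p (i : GrpI) (x : (j : Fin N) → Xs j) (y : Cls) : ℝ :=
  Γ.pY (Γ.proj x) y * Γ.pC i x

/-- Group probabilities `λ_w`, `λ_b = 1 - λ_w`. -/
def lam : GrpI → ℝ := fun i =>
  match i with
  | GrpI.w => Γ.lamw
  | GrpI.b => 1 - Γ.lamw

/-- The CDF `G` of the cost distribution. -/
def G (c : ℝ) : ℝ := ∫ t in Set.Iic c, Γ.g t

/-- The likelihood function `l(x) = p(x_𝒴 | q) / p(x_𝒴 | u)`. -/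
def lhd (x : (j : Fin N) → Xs j) : ℝ :=
  Γ.pY (Γ.proj x) Cls.q / Γ.pY (Γ.proj x) Cls.u

/-- The likelihood function on `X_𝒴`. -/
def lhdY (xY : (j : Γ.Ysub) → Xs j.1) : ℝ := Γ.pY xY Cls.q / Γ.pY xY Cls.u

/-- The set of likelihood values `{l_1 < … < l_n}`. -/
def LVset : Set ℝ := Set.range Γ.lhd

/-- The assumption that `1` is not a likelihood value
(equivalently, `WW` is single-peaked). -/
def OneNotLV : Prop := (1 : ℝ) ∉ Γ.LVset

/-- The largest likelihood value `l_n`. -/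
def lmax : ℝ := sSup Γ.LVset

/-- `⌈ℓ⌉`: the smallest likelihood value `≥ ℓ`. -/
def lceil (ℓ : ℝ) : ℝ := sInf {v | v ∈ Γ.LVset ∧ ℓ ≤ v}

/-- `⌈ℓ⌉⁻`: the next smallest likelihood value below `⌈ℓ⌉` (or `l_0 = 0`). -/
def lceilm (ℓ : ℝ) : ℝ := sSup (insert 0 {v | v ∈ Γ.LVset ∧ v < Γ.lceil ℓ})

/-- The smallest likelihood value `> ℓ`. -/
def lnext (ℓ : ℝ) : ℝ := sInf {v | v ∈ Γ.LVset ∧ ℓ < v}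

/-- The true distribution of features `μ_RE` given cost thresholds `c̄`. -/
def muRE (c : GrpI → ℝ) (i : GrpI) (x : (j : Fin N) → Xs j) : ℝ :=
  Γ.lam i * (Γ.G (c i) * Γ.p i x Cls.q + (1 - Γ.G (c i)) * Γ.p i x Cls.u)

/-- The true conditional probability (calibrated belief) `f_RE` given `c̄`. -/
def fRE (c : GrpI → ℝ) (i : GrpI) (x : (j : Fin N) → Xs j) : ℝ :=
  Γ.G (c i) * Γ.p i x Cls.q /
    (Γ.G (c i) * Γ.p i x Cls.q + (1 - Γ.G (c i)) * Γ.p i x Cls.u)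

/-- Utility `U_i(c̄(i), d(i))` of the representative `i`-applicant. -/
def Uapp (i : GrpI) (ci : ℝ) (di : ((j : Fin N) → Xs j) → ℝ) : ℝ :=
  Γ.om * ∑ x, (Γ.G ci * Γ.p i x Cls.q + (1 - Γ.G ci) * Γ.p i x Cls.u) * di x -
    ∫ t in Set.Iic ci, t * Γ.g t

/-- Firm utility `U_F(d, μ, f)`. -/
def UF (d μ f : GrpI → ((j : Fin N) → Xs j) → ℝ) : ℝ :=
  ∑ i, ∑ x, d i x * μ i x * (f i x * Γ.vq - (1 - f i x) * Γ.vu)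

/-- The color-blind true distribution of features `μ_cb,RE`. -/
def mucbRE (c : GrpI → ℝ) (x : (j : Fin N) → Xs j) : ℝ :=
  Γ.muRE c GrpI.w x + Γ.muRE c GrpI.b x

/-- The color-blind true conditional probability `f_cb,RE`. -/
def fcbRE (c : GrpI → ℝ) (x : (j : Fin N) → Xs j) : ℝ :=
  (Γ.muRE c GrpI.w x * Γ.fRE c GrpI.w x + Γ.muRE c GrpI.b x * Γ.fRE c GrpI.b x) /
    Γ.mucbRE c x

/-- Firm utility when data is color-blind. -/
def UFcb (dcb μcb fcb : ((j : Fin N) → Xs j) → ℝ) : ℝ :=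
  ∑ x, dcb x * μcb x * (fcb x * Γ.vq - (1 - fcb x) * Γ.vu)

/-- `d(i | l_m)`: conditional acceptance probability at likelihood value `lv`. -/
def dcond (i : GrpI) (di : ((j : Fin N) → Xs j) → ℝ) (lv : ℝ) : ℝ :=
  (∑ x ∈ Finset.univ.filter (fun x => Γ.lhd x = lv), Γ.p i x Cls.q * di x) /
    ∑ x ∈ Finset.univ.filter (fun x => Γ.lhd x = lv), Γ.p i x Cls.q

/-- The within-group policy `d(i)` is associated with the likelihood mixture `ℓ`. -/
def AssociatedWith (i : GrpI) (di : ((j : Fin N) → Xs j) → ℝ) (ℓ : ℝ) : Prop :=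
  0 ≤ ℓ ∧ ℓ ≤ Γ.lmax ∧
    ∀ lv ∈ Γ.LVset,
      (Γ.lceil ℓ < lv → Γ.dcond i di lv = 1) ∧
      (lv = Γ.lceil ℓ →
        Γ.dcond i di lv = (Γ.lceil ℓ - ℓ) / (Γ.lceil ℓ - Γ.lceilm ℓ)) ∧
      (lv < Γ.lceil ℓ → Γ.dcond i di lv = 0)

/-- A decision policy is fair if both within-group policies are associated with
the same likelihood mixture. -/
def Fair (d : GrpI → ((j : Fin N) → Xs j) → ℝ) : Prop :=
  ∃ ℓ, Γ.AssociatedWith GrpI.w (d GrpI.w) ℓ ∧ Γ.AssociatedWith GrpI.b (d GrpI.b) ℓ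

/-- `WW(l_m) = ω ∑_{x_𝒴 : l(x_𝒴) > l_m} (p(x_𝒴|q) - p(x_𝒴|u))`. -/
def WWval (t : ℝ) : ℝ :=
  Γ.om * ∑ xY ∈ Finset.univ.filter (fun xY => t < Γ.lhdY xY),
    (Γ.pY xY Cls.q - Γ.pY xY Cls.u)

/-- The piecewise-linear function `WW` interpolating the points `(l_m, WW(l_m))`. -/
def WW (ℓ : ℝ) : ℝ :=
  if Γ.lceil ℓ = Γ.lceilm ℓ then Γ.WWval (Γ.lceil ℓ)
  else
    (Γ.WWval (Γ.lceilm ℓ) * (Γ.lceil ℓ - ℓ) +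
        Γ.WWval (Γ.lceil ℓ) * (ℓ - Γ.lceilm ℓ)) /
      (Γ.lceil ℓ - Γ.lceilm ℓ)

/-- `EĒ(l_m)`: the unique cost with `G(EĒ(l_m)) = 1 / ((v_q/v_u) l_m + 1)`. -/
def EEbar (lv : ℝ) : ℝ := sInf {cc | 1 / (Γ.vq / Γ.vu * lv + 1) ≤ Γ.G cc}

/-- The correspondence `EE : [0, l_n] ⇒ ℝ`. -/
def EE (ℓ : ℝ) : Set ℝ :=
  if ℓ = 0 then Set.Ici (Γ.EEbar (Γ.lceil 0))
  else if ℓ = Γ.lmax then Set.Iic (Γ.EEbar Γ.lmax)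
  else if ℓ ∈ Γ.LVset then Set.Icc (Γ.EEbar (Γ.lnext ℓ)) (Γ.EEbar ℓ)
  else {Γ.EEbar (Γ.lceil ℓ)}

/-- Each representative applicant's cost threshold is a best response to `d`. -/
def BestResponds (c : GrpI → ℝ) (d : GrpI → ((j : Fin N) → Xs j) → ℝ) : Prop :=
  ∀ (i : GrpI) (c' : ℝ), Γ.Uapp i c' (d i) ≤ Γ.Uapp i (c i) (d i)

/-- An (un-controlled) equilibrium. -/
def IsEquilibrium (c : GrpI → ℝ) (d : GrpI → ((j : Fin N) → Xs j) → ℝ) : Prop :=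
  IsPolicy d ∧ Γ.BestResponds c d ∧
    ∀ d', IsPolicy d' →
      Γ.UF d' (Γ.muRE c) (Γ.fRE c) ≤ Γ.UF d (Γ.muRE c) (Γ.fRE c)

/-- A `k`-controlled equilibrium, for the control `(μ, f) ↦ K μ f`. -/
def IsControlledEq
    (K : (GrpI → ((j : Fin N) → Xs j) → ℝ) → (GrpI → ((j : Fin N) → Xs j) → ℝ) →
      Set (GrpI → ((j : Fin N) → Xs j) → ℝ))
    (c : GrpI → ℝ) (d : GrpI → ((j : Fin N) → Xs j) → ℝ) : Prop :=
  d ∈ K (Γ.muRE c) (Γ.fRE c) ∧ Γ.BestResponds c d ∧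
    ∀ d' ∈ K (Γ.muRE c) (Γ.fRE c),
      Γ.UF d' (Γ.muRE c) (Γ.fRE c) ≤ Γ.UF d (Γ.muRE c) (Γ.fRE c)

/-- `𝒮_k(μ, f)`: firm-optimal policies under the control `K` at `(μ, f)`. -/
def Smax
    (K : (GrpI → ((j : Fin N) → Xs j) → ℝ) → (GrpI → ((j : Fin N) → Xs j) → ℝ) →
      Set (GrpI → ((j : Fin N) → Xs j) → ℝ))
    (μ f : GrpI → ((j : Fin N) → Xs j) → ℝ) :
    Set (GrpI → ((j : Fin N) → Xs j) → ℝ) :=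
  {d | d ∈ K μ f ∧ ∀ d' ∈ K μ f, Γ.UF d' μ f ≤ Γ.UF d μ f}

/-- A `k`-controlled `ε`-equilibrium. -/
def IsCtrlEpsEq
    (K : (GrpI → ((j : Fin N) → Xs j) → ℝ) → (GrpI → ((j : Fin N) → Xs j) → ℝ) →
      Set (GrpI → ((j : Fin N) → Xs j) → ℝ))
    (ε : ℝ) (c : GrpI → ℝ) (d : GrpI → ((j : Fin N) → Xs j) → ℝ) : Prop :=
  ∃ μ f, FullSupp μ ∧ OpenBelief f ∧
    pairDist μ f (Γ.muRE c) (Γ.fRE c) ≤ ε ∧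
    Γ.BestResponds c d ∧ d ∈ K μ f ∧ ∀ d' ∈ K μ f, Γ.UF d' μ f ≤ Γ.UF d μ f

/-- Best responses of applicants to a color-blind policy. -/
def BestRespondsCb (c : GrpI → ℝ) (dcb : ((j : Fin N) → Xs j) → ℝ) : Prop :=
  ∀ (i : GrpI) (c' : ℝ), Γ.Uapp i c' dcb ≤ Γ.Uapp i (c i) dcb

/-- An equilibrium when data is color-blind (unrestricted control). -/
def IsCbEquilibrium (c : GrpI → ℝ) (dcb : ((j : Fin N) → Xs j) → ℝ) : Prop :=
  IsCbPolicy dcb ∧ Γ.BestRespondsCb c dcb ∧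
    ∀ dcb', IsCbPolicy dcb' →
      Γ.UFcb dcb' (Γ.mucbRE c) (Γ.fcbRE c) ≤ Γ.UFcb dcb (Γ.mucbRE c) (Γ.fcbRE c)

/-- A `k_cb`-controlled equilibrium when data is color-blind. -/
def IsCbControlledEq (K : Set (((j : Fin N) → Xs j) → ℝ)) (c : GrpI → ℝ)
    (dcb : ((j : Fin N) → Xs j) → ℝ) : Prop :=
  dcb ∈ K ∧ Γ.BestRespondsCb c dcb ∧
    ∀ dcb' ∈ K,
      Γ.UFcb dcb' (Γ.mucbRE c) (Γ.fcbRE c) ≤ Γ.UFcb dcb (Γ.mucbRE c) (Γ.fcbRE c)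

end Game

/-- A control when data is color-blind: for each `X` and each
`(μ_cb, f_cb) ∈ Δ°(X) × (0,1)^X` it specifies a nonempty compact set of
color-blind decision policies. -/
structure CbControl : Type 1 where
  sets : ∀ (N : ℕ) (Xs : Fin N → Type) [∀ j, Fintype (Xs j)] [∀ j, Nonempty (Xs j)],
    (((j : Fin N) → Xs j) → ℝ) → (((j : Fin N) → Xs j) → ℝ) →
      Set (((j : Fin N) → Xs j) → ℝ)
  nonempty : ∀ (N : ℕ) (Xs : Fin N → Type) [∀ j, Fintype (Xs j)]
    [∀ j, Nonempty (Xs j)] (μ f : ((j : Fin N) → Xs j) → ℝ),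
    (∀ x, 0 < μ x) → (∑ x, μ x = 1) → (∀ x, f x ∈ Set.Ioo (0 : ℝ) 1) →
    (sets N Xs μ f).Nonempty
  compact : ∀ (N : ℕ) (Xs : Fin N → Type) [∀ j, Fintype (Xs j)]
    [∀ j, Nonempty (Xs j)] (μ f : ((j : Fin N) → Xs j) → ℝ),
    (∀ x, 0 < μ x) → (∑ x, μ x = 1) → (∀ x, f x ∈ Set.Ioo (0 : ℝ) 1) →
    IsCompact (sets N Xs μ f)
  mem_policy : ∀ (N : ℕ) (Xs : Fin N → Type) [∀ j, Fintype (Xs j)]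
    [∀ j, Nonempty (Xs j)] (μ f : ((j : Fin N) → Xs j) → ℝ),
    (∀ x, 0 < μ x) → (∑ x, μ x = 1) → (∀ x, f x ∈ Set.Ioo (0 : ℝ) 1) →
    sets N Xs μ f ⊆ {dcb | IsCbPolicy dcb}

namespace CE

open Real Set MeasureTheory Finset

/-! ### Sum enumeration helpers -/

lemma sum_grpI (F : GrpI → ℝ) : ∑ i, F i = F GrpI.w + F GrpI.b := by
  rw [show (Finset.univ : Finset GrpI) = {GrpI.w, GrpI.b} from rfl,
    Finset.sum_insert (by decide), Finset.sum_singleton]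

def e2 : Bool × Bool ≃ ((j : Fin 2) → Bool) where
  toFun p := ![p.1, p.2]
  invFun f := (f 0, f 1)
  left_inv p := by simp
  right_inv f := by funext j; fin_cases j <;> simp

lemma sum_pi2 (F : ((j : Fin 2) → Bool) → ℝ) :
    ∑ x, F x = F ![true, true] + F ![true, false] +
      (F ![false, true] + F ![false, false]) := by
  rw [← Fintype.sum_equiv e2 (fun p => F (e2 p)) F (fun p => rfl),
    Fintype.sum_prod_type]
  simp only [Fintype.sum_bool]
  rfl

/-! ### The 𝒴 subset and its helpers -/

def Ys : Finset (Fin 2) := {0}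

lemma mem0 : (0 : Fin 2) ∈ Ys := by decide

def y0 : {j // j ∈ Ys} := ⟨0, mem0⟩

lemma subeq (j : {j // j ∈ Ys}) : j = y0 := by
  rcases j with ⟨j, hj⟩
  have : j = 0 := Finset.mem_singleton.mp hj
  subst this; rfl

def eY : Bool ≃ ({j // j ∈ Ys} → Bool) where
  toFun b := fun _ => b
  invFun f := f y0
  left_inv b := rfl
  right_inv f := by funext j; rw [subeq j]

lemma sum_piY (F : ({j // j ∈ Ys} → Bool) → ℝ) :
    ∑ xY, F xY = F (fun _ => true) + F (fun _ => false) := by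
  rw [← Fintype.sum_equiv eY (fun b => F (eY b)) F (fun b => rfl),
    Fintype.sum_bool]
  rfl

/-! ### The primitive data of the counterexample game -/

def pYf : Bool → Cls → ℝ := fun b y =>
  match b, y with
  | true, Cls.q => 2/3
  | true, Cls.u => 1/3
  | false, Cls.q => 1/3
  | false, Cls.u => 2/3

def rr : GrpI → Bool → ℝ := fun i b =>
  match i with
  | GrpI.w => if b then 9/10 else 4/5
  | GrpI.b => 1/10

def gg : ℝ → ℝ := fun t => Real.exp (-|t - 1|) / 2

/-! ### Analytic facts about the cost density `gg` -/

lemma gg_pos (t : ℝ) : 0 < gg t := by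
  unfold gg; positivity

lemma gg_intIic {c : ℝ} (hc : c ≤ 1) : IntegrableOn gg (Iic c) := by
  have h : IntegrableOn (fun t : ℝ => Real.exp t * (Real.exp (-1) / 2)) (Iic c) :=
    (integrableOn_exp_Iic c).mul_const _
  apply h.congr_fun ?_ measurableSet_Iic
  intro t ht
  have ht1 : t - 1 ≤ 0 := by simp only [Set.mem_Iic] at ht; linarith
  unfold gg
  rw [abs_of_nonpos ht1, neg_neg, show t - 1 = t + (-1) by ring, Real.exp_add]
  ring

lemma gg_intIic_val {c : ℝ} (hc : c ≤ 1) :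
    ∫ t in Iic c, gg t = Real.exp (c - 1) / 2 := by
  have heq : EqOn (fun t : ℝ => Real.exp t * (Real.exp (-1) / 2)) gg (Iic c) := by
    intro t ht
    have ht1 : t - 1 ≤ 0 := by simp only [Set.mem_Iic] at ht; linarith
    unfold gg
    rw [abs_of_nonpos ht1, neg_neg, show t - 1 = t + (-1) by ring, Real.exp_add]
    ring
  rw [← setIntegral_congr_fun measurableSet_Iic heq, integral_mul_const,
    integral_exp_Iic, show c - 1 = c + (-1) by ring, Real.exp_add]
  ring

lemma gg_intIoi {c : ℝ} (hc : 1 ≤ c) : IntegrableOn gg (Ioi c) := by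
  have h : IntegrableOn (fun t : ℝ => Real.exp (-1 * t) * (Real.exp 1 / 2)) (Ioi c) :=
    (exp_neg_integrableOn_Ioi c one_pos).mul_const _
  apply h.congr_fun ?_ measurableSet_Ioi
  intro t ht
  have ht1 : 0 ≤ t - 1 := by simp only [Set.mem_Ioi] at ht; linarith
  unfold gg
  rw [abs_of_nonneg ht1, show -(t-1) = -1 * t + 1 by ring, Real.exp_add]
  ring

lemma gg_intIoi_val {c : ℝ} (hc : 1 ≤ c) :
    ∫ t in Ioi c, gg t = Real.exp (1 - c) / 2 := by
  have heq : EqOn (fun t : ℝ => Real.exp (-t) * (Real.exp 1 / 2)) gg (Ioi c) := by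
    intro t ht
    have ht1 : 0 ≤ t - 1 := by simp only [Set.mem_Ioi] at ht; linarith
    unfold gg
    rw [abs_of_nonneg ht1, show -(t-1) = -t + 1 by ring, Real.exp_add]
    ring
  rw [← setIntegral_congr_fun measurableSet_Ioi heq, integral_mul_const,
    integral_exp_neg_Ioi, show (1:ℝ) - c = -c + 1 by ring, Real.exp_add]
  ring

lemma gg_integrable : Integrable gg := by
  have := (gg_intIic (le_refl 1)).union (gg_intIoi (le_refl 1))
  rwa [Iic_union_Ioi, integrableOn_univ] at this

lemma gg_norm : (∫ t, gg t) = 1 := by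
  rw [← intervalIntegral.integral_Iic_add_Ioi (gg_intIic (le_refl 1)) (gg_intIoi (le_refl 1)),
    gg_intIic_val (le_refl 1), gg_intIoi_val (le_refl 1)]
  norm_num

lemma gg_continuous : Continuous gg := by
  unfold gg; fun_prop

lemma int_exp_abs {a : ℝ} (ha : 0 < a) :
    Integrable (fun x : ℝ => Real.exp (-(a * |x - 1|))) := by
  have h0 : IntegrableOn (fun x : ℝ => Real.exp (-(a * |x|))) (Ioi 0) := by
    have := exp_neg_integrableOn_Ioi 0 ha
    apply this.congr_fun ?_ measurableSet_Ioi
    intro x hx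
    simp only [Set.mem_Ioi] at hx
    dsimp only
    rw [abs_of_pos hx, neg_mul]
  have int_Iic : IntegrableOn (fun x : ℝ ↦ Real.exp (-(a * |x|))) (Iic 0) := by
    rw [← Measure.map_neg_eq_self (volume : Measure ℝ)]
    have m : MeasurableEmbedding fun x : ℝ => -x :=
      (Homeomorph.neg ℝ).measurableEmbedding
    rw [m.integrableOn_map_iff]
    simp_rw [Function.comp_def, abs_neg, neg_preimage, neg_Iic, neg_zero]
    exact Iff.mpr integrableOn_Ici_iff_integrableOn_Ioi h0
  have h : IntegrableOn (fun x : ℝ => Real.exp (-(a * |x|))) (Iic 0 ∪ Ioi 0) :=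
    int_Iic.union h0
  rw [Iic_union_Ioi, integrableOn_univ] at h
  exact h.comp_sub_right 1

lemma gg_abs_integrable : Integrable (fun t : ℝ => |t| * gg t) := by
  refine Integrable.mono' (int_exp_abs (a := 1/2) (by norm_num))
    ((continuous_abs.mul gg_continuous).aestronglyMeasurable)
    (Filter.Eventually.of_forall fun t => ?_)
  have h1 : |t| ≤ |t - 1| + 1 := by
    calc |t| = |(t - 1) + 1| := by ring_nf
    _ ≤ |t - 1| + |(1:ℝ)| := abs_add_le _ _
    _ = |t - 1| + 1 := by norm_num
  set s := |t - 1| with hs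
  have hs0 : 0 ≤ s := abs_nonneg _
  have h2 : s / 2 + 1 ≤ Real.exp (s / 2) := by
    have := Real.add_one_le_exp (s / 2); linarith
  have e1 : (0:ℝ) < Real.exp (s/2) := Real.exp_pos _
  have e3 : (0:ℝ) < Real.exp (-(s/2)) := Real.exp_pos _
  have hprod : Real.exp (s/2) * Real.exp (-(s/2)) = 1 := by
    rw [← Real.exp_add]; norm_num
  have hsq : Real.exp (-s) = Real.exp (-(s/2)) * Real.exp (-(s/2)) := by
    rw [← Real.exp_add]; ring_nf
  have hgg : gg t = Real.exp (-s) / 2 := rfl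
  rw [Real.norm_eq_abs, abs_of_nonneg (mul_nonneg (abs_nonneg t) (gg_pos t).le), hgg]
  have hgoal : |t| * (Real.exp (-s) / 2) ≤ Real.exp (-(s/2)) := by
    have hts : |t| ≤ 2 * Real.exp (s/2) := by nlinarith
    calc |t| * (Real.exp (-s) / 2)
        = |t| * Real.exp (-(s/2)) * Real.exp (-(s/2)) / 2 := by rw [hsq]; ring
      _ ≤ (2 * Real.exp (s/2)) * Real.exp (-(s/2)) * Real.exp (-(s/2)) / 2 := by
          have := mul_le_mul_of_nonneg_right hts (le_of_lt e3)
          nlinarith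
      _ = Real.exp (-(s/2)) := by
          have : Real.exp (s/2) * Real.exp (-(s/2)) = 1 := hprod
          nlinarith
  calc |t| * (Real.exp (-s) / 2) ≤ Real.exp (-(s/2)) := hgoal
    _ = Real.exp (-((1:ℝ)/2 * |t - 1|)) := by rw [hs]; ring_nf

end CE
namespace CE

open Real Set MeasureTheory Finset

/-! ### The counterexample game -/

def Γce : Game 2 (fun _ => Bool) where
  lamw := 1/2
  lamw_pos := by norm_num
  lamw_lt_one := by norm_num
  Ysub := Ys
  Ysub_nonempty := ⟨0, mem0⟩
  pY := fun xY y => pYf (xY y0) y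
  pC := fun i x => if x 1 then rr i (x 0) else 1 - rr i (x 0)
  pY_pos := by
    intro xY y
    cases h : xY y0 <;> cases y <;> simp [pYf, h] <;> norm_num
  pC_pos := by
    intro i x
    cases i <;> cases h1 : x 1 <;> cases h0 : x 0 <;> simp [rr, h1, h0] <;> norm_num
  pY_sum := by
    intro y
    rw [sum_piY (fun xY => pYf (xY y0) y)]
    cases y <;> simp [pYf, y0] <;> norm_num
  pC_sum := by
    intro i xY
    rw [Finset.sum_filter]
    rw [sum_pi2]
    have hiff : ∀ x : (j : Fin 2) → Bool,
        ((fun j : {j // j ∈ Ys} => x j.1) = xY) ↔ x 0 = xY y0 := by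
      intro x
      constructor
      · intro h; rw [← h]; rfl
      · intro h
        funext j
        rw [subeq j]
        exact h
    simp only [hiff]
    cases h : xY y0 <;>
      simp only [Matrix.cons_val_zero, Matrix.cons_val_one, Matrix.head_cons] <;>
      cases i <;> simp [rr] <;> norm_num
  g := gg
  g_pos := gg_pos
  g_int := gg_integrable
  g_norm := gg_norm
  g_abs_int := by
    have := gg_abs_integrable
    simpa using this
  vq := 1
  vu := 1
  om := 300
  vq_pos := one_pos
  vu_pos := one_pos
  om_pos := by norm_num

/-- The discriminatory cost thresholds. -/
def cex : GrpI → ℝ := fun i => match i with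
  | GrpI.w => 10
  | GrpI.b => 0

/-- The color-blind decision policy: accept iff `x 1 = true`. -/
def dex : GrpI → ((j : Fin 2) → Bool) → ℝ := fun _ x => if x 1 then 1 else 0

@[simp] lemma Γce_pY : Γce.pY = fun xY y => pYf (xY y0) y := rfl
@[simp] lemma Γce_pC :
    Γce.pC = fun i x => if x 1 then rr i (x 0) else 1 - rr i (x 0) := rfl
@[simp] lemma Γce_g : Γce.g = gg := rfl
@[simp] lemma Γce_vq : Γce.vq = 1 := rfl
@[simp] lemma Γce_vu : Γce.vu = 1 := rfl
@[simp] lemma Γce_om : Γce.om = 300 := rfl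
@[simp] lemma Γce_lamw : Γce.lamw = 1/2 := rfl

lemma Γce_p (i : GrpI) (x : (j : Fin 2) → Bool) (y : Cls) :
    Γce.p i x y = pYf (x 0) y * (if x 1 then rr i (x 0) else 1 - rr i (x 0)) := rfl

/-! ### Values of the CDF `G` -/

lemma G_eq_Iic (c : ℝ) : Γce.G c = ∫ t in Iic c, gg t := rfl

lemma G_zero : Γce.G 0 = Real.exp (-1) / 2 := by
  rw [G_eq_Iic, gg_intIic_val (by norm_num : (0:ℝ) ≤ 1)]
  norm_num

set_option maxHeartbeats 1000000 in
lemma G_ten : Γce.G 10 = 1 - Real.exp (-9) / 2 := by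
  have h1 : IntegrableOn gg (Iic (10:ℝ)) := gg_integrable.integrableOn
  have h2 : IntegrableOn gg (Ioi (10:ℝ)) := gg_intIoi (by norm_num)
  have hsplit := intervalIntegral.integral_Iic_add_Ioi h1 h2
  rw [gg_norm] at hsplit
  have hval := gg_intIoi_val (by norm_num : (1:ℝ) ≤ 10)
  rw [G_eq_Iic]
  rw [hval] at hsplit
  norm_num at hsplit ⊢
  linarith

lemma exp_neg_one_le : Real.exp (-1) ≤ 1/2 := by
  rw [Real.exp_neg]
  rw [inv_le_comm₀ (Real.exp_pos 1) (by norm_num)]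
  have := Real.add_one_le_exp (1:ℝ)
  linarith

lemma exp_neg_nine_le : Real.exp (-9) ≤ 1/2 := by
  calc Real.exp (-9) ≤ Real.exp (-1) := Real.exp_le_exp.mpr (by norm_num)
    _ ≤ 1/2 := exp_neg_one_le

lemma G_zero_mem : Γce.G 0 ∈ Set.Ioo (0:ℝ) 1 := by
  rw [G_zero]
  constructor
  · positivity
  · have := exp_neg_one_le; linarith

lemma G_ten_mem : Γce.G 10 ∈ Set.Ioo (0:ℝ) 1 := by
  rw [G_ten]
  have h1 := exp_neg_nine_le
  have h2 := Real.exp_pos (-9)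
  constructor <;> [linarith; linarith]

end CE
namespace CE

open Real Set MeasureTheory Finset

/-! ### The applicants' best-response property -/

/-- In any game, the cost threshold `ω (A - B)` (where `A`, `B` are the
acceptance probabilities conditional on being qualified / unqualified) is a
best response of the representative applicant. -/
lemma uapp_le {N : ℕ} {Xs : Fin N → Type} [∀ j, Fintype (Xs j)]
    [∀ j, Nonempty (Xs j)] (Γ : Game N Xs) (i : GrpI)
    (di : ((j : Fin N) → Xs j) → ℝ) (c' : ℝ) :
    Γ.Uapp i c' di ≤
      Γ.Uapp i (Γ.om * ((∑ x, Γ.p i x Cls.q * di x) - ∑ x, Γ.p i x Cls.u * di x)) di := by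
  set A := ∑ x, Γ.p i x Cls.q * di x with hA
  set B := ∑ x, Γ.p i x Cls.u * di x with hB
  set cs := Γ.om * (A - B) with hcs
  have hg : Integrable Γ.g := Γ.g_int
  have htg : Integrable (fun t => t * Γ.g t) := by
    refine Integrable.mono' Γ.g_abs_int
      (aestronglyMeasurable_id.mul hg.aestronglyMeasurable)
      (Filter.Eventually.of_forall fun t => ?_)
    rw [Real.norm_eq_abs, abs_mul, abs_of_pos (Γ.g_pos t)]
  have key : ∀ cc : ℝ, Γ.Uapp i cc di =
      Γ.om * B + (cs * Γ.G cc - ∫ t in Iic cc, t * Γ.g t) := by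
    intro cc
    have hsum : ∑ x, (Γ.G cc * Γ.p i x Cls.q + (1 - Γ.G cc) * Γ.p i x Cls.u) * di x
        = Γ.G cc * A + (1 - Γ.G cc) * B := by
      simp only [add_mul, mul_assoc]
      rw [Finset.sum_add_distrib, ← Finset.mul_sum, ← Finset.mul_sum]
    show Γ.om * ∑ x, (Γ.G cc * Γ.p i x Cls.q + (1 - Γ.G cc) * Γ.p i x Cls.u) * di x
        - (∫ t in Iic cc, t * Γ.g t) = _
    rw [hsum, hcs]
    ring
  rw [key, key]
  have hsub : cs * Γ.G c' - (∫ t in Iic c', t * Γ.g t) ≤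
      cs * Γ.G cs - ∫ t in Iic cs, t * Γ.g t := by
    have hGdiff : Γ.G cs - Γ.G c' = ∫ t in c'..cs, Γ.g t := by
      rw [← intervalIntegral.integral_Iic_sub_Iic hg.integrableOn hg.integrableOn]
      rfl
    have htdiff : (∫ t in Iic cs, t * Γ.g t) - (∫ t in Iic c', t * Γ.g t)
        = ∫ t in c'..cs, t * Γ.g t := by
      rw [← intervalIntegral.integral_Iic_sub_Iic htg.integrableOn htg.integrableOn]
    have hdiff : (cs * Γ.G cs - ∫ t in Iic cs, t * Γ.g t)
        - (cs * Γ.G c' - ∫ t in Iic c', t * Γ.g t)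
        = ∫ t in c'..cs, (cs - t) * Γ.g t := by
      have h1 : ∫ t in c'..cs, (cs - t) * Γ.g t
          = (∫ t in c'..cs, cs * Γ.g t) - ∫ t in c'..cs, t * Γ.g t := by
        rw [← intervalIntegral.integral_sub (hg.intervalIntegrable.const_mul cs)
          htg.intervalIntegrable]
        congr 1
        funext t
        ring
      rw [h1, intervalIntegral.integral_const_mul, ← hGdiff, ← htdiff]
      ring
    have hnn : 0 ≤ ∫ t in c'..cs, (cs - t) * Γ.g t := by
      rcases le_total c' cs with hle | hle
      · exact intervalIntegral.integral_nonneg hle fun u hu =>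
          mul_nonneg (sub_nonneg.2 hu.2) (Γ.g_pos u).le
      · rw [intervalIntegral.integral_symm]
        have : (∫ t in cs..c', (cs - t) * Γ.g t)
            = - ∫ t in cs..c', (t - cs) * Γ.g t := by
          rw [← intervalIntegral.integral_neg]
          congr 1
          funext t
          ring
        rw [this, neg_neg]
        exact intervalIntegral.integral_nonneg hle fun u hu =>
          mul_nonneg (sub_nonneg.2 hu.1) (Γ.g_pos u).le
    linarith
  linarith

end CE
namespace CE

open Real Set MeasureTheory Finset

/-! ### Best responses at the discriminatory thresholds -/

lemma cex_eq (i : GrpI) :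
    cex i = Γce.om * ((∑ x, Γce.p i x Cls.q * dex i x) -
      ∑ x, Γce.p i x Cls.u * dex i x) := by
  cases i <;>
    rw [sum_pi2, sum_pi2] <;>
    simp only [Γce_p, Γce_om, dex, cex, pYf, rr, Matrix.cons_val_zero,
      Matrix.cons_val_one, Matrix.head_cons, if_true, if_false] <;>
    norm_num

lemma best_responds : Γce.BestResponds cex dex := by
  intro i c'
  have h := uapp_le Γce i (dex i) c'
  rwa [← cex_eq i] at h

/-! ### The firm's pointwise weights -/

/-- The net value to the firm of accepting `(i, x)`, weighted by `μ_RE`. -/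
noncomputable def Wce (i : GrpI) (x : (j : Fin 2) → Bool) : ℝ :=
  Γce.lam i * (Γce.G (cex i) * Γce.p i x Cls.q -
    (1 - Γce.G (cex i)) * Γce.p i x Cls.u)

lemma G_cex_mem (i : GrpI) : Γce.G (cex i) ∈ Set.Ioo (0:ℝ) 1 := by
  cases i
  · exact (show cex GrpI.w = (10:ℝ) from rfl) ▸ G_ten_mem
  · exact (show cex GrpI.b = (0:ℝ) from rfl) ▸ G_zero_mem

lemma muf (i : GrpI) (x : (j : Fin 2) → Bool) :
    Γce.muRE cex i x * (Γce.fRE cex i x * Γce.vq -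
      (1 - Γce.fRE cex i x) * Γce.vu) = Wce i x := by
  have hpq : 0 < Γce.p i x Cls.q := mul_pos (Γce.pY_pos _ _) (Γce.pC_pos _ _)
  have hpu : 0 < Γce.p i x Cls.u := mul_pos (Γce.pY_pos _ _) (Γce.pC_pos _ _)
  have hG := G_cex_mem i
  have hD : 0 < Γce.G (cex i) * Γce.p i x Cls.q +
      (1 - Γce.G (cex i)) * Γce.p i x Cls.u := by
    have := hG.1; have := hG.2
    nlinarith
  unfold Game.muRE Game.fRE Wce
  rw [Γce_vq, Γce_vu]
  field_simp
  ring

lemma Wsum_nonneg (x : (j : Fin 2) → Bool) (hx : x 1 = true) :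
    0 ≤ Wce GrpI.w x + Wce GrpI.b x := by
  have h9 := exp_neg_nine_le
  have h9p := Real.exp_pos (-9)
  have h1 := exp_neg_one_le
  have h1p := Real.exp_pos (-1)
  unfold Wce
  rw [show cex GrpI.w = (10:ℝ) from rfl, show cex GrpI.b = (0:ℝ) from rfl,
    G_ten, G_zero]
  cases h0 : x 0 <;>
    simp only [Game.lam, Γce_lamw, Γce_p, pYf, rr, h0, hx, if_true, if_false] <;>
    norm_num <;> nlinarith

lemma Wsum_nonpos (x : (j : Fin 2) → Bool) (hx : x 1 = false) :
    Wce GrpI.w x + Wce GrpI.b x ≤ 0 := by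
  have h9 := exp_neg_nine_le
  have h9p := Real.exp_pos (-9)
  have h1 := exp_neg_one_le
  have h1p := Real.exp_pos (-1)
  unfold Wce
  rw [show cex GrpI.w = (10:ℝ) from rfl, show cex GrpI.b = (0:ℝ) from rfl,
    G_ten, G_zero]
  cases h0 : x 0 <;>
    simp only [Game.lam, Γce_lamw, Γce_p, pYf, rr, h0, hx, if_true, if_false] <;>
    norm_num <;> nlinarith

lemma UF_eq (dd : GrpI → ((j : Fin 2) → Bool) → ℝ) :
    Γce.UF dd (Γce.muRE cex) (Γce.fRE cex) =
      ∑ x, (dd GrpI.w x * Wce GrpI.w x + dd GrpI.b x * Wce GrpI.b x) := by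
  show (∑ i, ∑ x, dd i x * Γce.muRE cex i x *
      (Γce.fRE cex i x * Γce.vq - (1 - Γce.fRE cex i x) * Γce.vu)) = _
  rw [sum_grpI]
  rw [← Finset.sum_add_distrib]
  apply Finset.sum_congr rfl
  intro x _
  rw [mul_assoc, mul_assoc, muf, muf]

lemma firm_opt (d' : GrpI → ((j : Fin 2) → Bool) → ℝ)
    (hpol : IsPolicy d') (hcb : ∀ x, d' GrpI.w x = d' GrpI.b x) :
    Γce.UF d' (Γce.muRE cex) (Γce.fRE cex) ≤
      Γce.UF dex (Γce.muRE cex) (Γce.fRE cex) := by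
  rw [UF_eq, UF_eq]
  apply Finset.sum_le_sum
  intro x _
  rw [← hcb x]
  have hdb : dex GrpI.b x = dex GrpI.w x := rfl
  rw [hdb]
  cases hx : x 1
  · have hd0 : dex GrpI.w x = 0 := by simp [dex, hx]
    rw [hd0]
    have h0 := (hpol GrpI.w x).1
    have hW := Wsum_nonpos x hx
    have := mul_nonpos_of_nonneg_of_nonpos h0 hW
    nlinarith
  · have hd1 : dex GrpI.w x = 1 := by simp [dex, hx]
    rw [hd1]
    have h1 := (hpol GrpI.w x).2
    have hW := Wsum_nonneg x hx
    have := mul_nonneg (sub_nonneg.2 h1) hW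
    nlinarith

/-! ### `1` is not a likelihood value -/

lemma one_not_lv : Γce.OneNotLV := by
  rintro ⟨x, hx⟩
  have : Γce.lhd x = pYf (x 0) Cls.q / pYf (x 0) Cls.u := rfl
  rw [this] at hx
  cases h0 : x 0 <;> rw [h0] at hx <;> simp [pYf] at hx <;> norm_num at hx

end CE
/-- **Proposition.** The color-blind control is not ideal: there exists a game
and a color-blind-controlled equilibrium of that game which is not a
non-discriminatory equilibrium, so property (2) of an ideal control fails. -/
theorem color_blind_control_not_ideal :
    ∃ (N : ℕ) (Xs : Fin N → Type) (_ : ∀ j, Fintype (Xs j))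
      (_ : ∀ j, Nonempty (Xs j)) (Γ : Game N Xs)
      (c : GrpI → ℝ) (d : GrpI → ((j : Fin N) → Xs j) → ℝ),
      Γ.OneNotLV ∧
      Γ.IsControlledEq (fun _ _ => CBset) c d ∧
      ¬(Γ.IsEquilibrium c d ∧ c GrpI.w = c GrpI.b) := by
  refine ⟨2, fun _ => Bool, fun _ => inferInstanceAs (Fintype Bool),
    fun _ => inferInstanceAs (Nonempty Bool), CE.Γce, CE.cex, CE.dex,
    CE.one_not_lv, ⟨?_, CE.best_responds, ?_⟩, ?_⟩
  · refine ⟨fun i x => ?_, fun x => rfl⟩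
    cases hx : x 1 <;> simp [CE.dex, hx]
  · rintro d' ⟨hpol, hcb⟩
    exact CE.firm_opt d' hpol hcb
  · rintro ⟨-, hcb⟩
    have hw : CE.cex GrpI.w = 10 := rfl
    have hb : CE.cex GrpI.b = 0 := rfl
    rw [hw, hb] at hcb
    norm_num at hcb
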